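/- For every natural number k and every nonzero real number q, setting χ = q + q⁻¹, one has ∑_{j=0}^{2k} q^{2j−2k} = 4^{−k} · ∑_{n=1}^{k+1} C(2k+1, 2n−1) · χ^{2(k−n+1)} · (χ² − 4)^{n−1}, where C(n,r) denotes the binomial coefficient. -/

import Mathlib

open Finset

private lemma pair_sum (f : ℕ → ℝ) (n : ℕ) :
    ∑ m ∈ range (2 * n), f m = ∑ i ∈ range n, (f (2 * i) + f (2 * i + 1)) := by
  induction n with
  | zero => simp
  | succ n ih =>
    rw [Finset.sum_range_succ, ← ih, show 2 * (n + 1) = 2 * n + 1 + 1 by ring,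
      Finset.sum_range_succ, Finset.sum_range_succ]
    ring

theorem stmt2 (k : ℕ) (q : ℝ) (hq : q ≠ 0) :
    ∑ j ∈ Finset.range (2 * k + 1), q ^ (2 * (j : ℤ) - 2 * (k : ℤ)) =
      (4 : ℝ) ^ (-(k : ℤ)) *
        ∑ n ∈ Finset.Icc 1 (k + 1),
          (Nat.choose (2 * k + 1) (2 * n - 1) : ℝ) * (q + q⁻¹) ^ (2 * (k + 1 - n)) *
            ((q + q⁻¹) ^ 2 - 4) ^ (n - 1) := by
  by_cases hb : q - q⁻¹ = 0
  · -- degenerate case q² = 1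
    have hinv : q⁻¹ = q := (sub_eq_zero.mp hb).symm
    have hq2 : q ^ 2 = 1 := by
      rw [pow_two]; nth_rewrite 2 [← hinv]; exact mul_inv_cancel₀ hq
    have hχ2 : (q + q⁻¹) ^ 2 = 4 := by
      rw [hinv]
      have h : (q + q) ^ 2 = 4 * q ^ 2 := by ring
      rw [h, hq2]; norm_num
    have hL : ∀ j ∈ range (2 * k + 1), q ^ (2 * (j : ℤ) - 2 * (k : ℤ)) = (1 : ℝ) := by
      intro j _
      rw [show (2 * (j : ℤ) - 2 * (k : ℤ)) = 2 * ((j : ℤ) - k) by ring, zpow_mul,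
        show ((2:ℤ)) = ((2:ℕ):ℤ) by norm_num, zpow_natCast, hq2, one_zpow]
    rw [Finset.sum_congr rfl hL, Finset.sum_const, Finset.card_range,
      Finset.sum_eq_single_of_mem 1 (Finset.mem_Icc.mpr ⟨le_rfl, by omega⟩)]
    · push_cast
      rw [pow_mul, hχ2, zpow_neg, zpow_natCast]
      norm_num
      field_simp
    · intro n hn hn1
      have h1 : 1 ≤ n := (Finset.mem_Icc.mp hn).1
      rw [hχ2]
      simp [zero_pow (show n - 1 ≠ 0 by omega)]
  · -- generic case
    set b := q - q⁻¹ with hbdef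
    set χ := q + q⁻¹ with hχdef
    have hb2 : χ ^ 2 - 4 = b ^ 2 := by
      rw [hχdef, hbdef]; field_simp; ring
    have hplus : χ + b = 2 * q := by rw [hχdef, hbdef]; ring
    have hminus : χ - b = 2 * q⁻¹ := by rw [hχdef, hbdef]; ring
    set N := 2 * k + 1 with hN
    -- LHS * b telescopes
    have hA : (∑ j ∈ range N, q ^ (2 * (j : ℤ) - 2 * (k : ℤ))) * b
        = q ^ (N : ℤ) - q ^ (-(N : ℤ)) := by
      have hterm : ∀ j ∈ range N, q ^ (2 * (j : ℤ) - 2 * (k : ℤ)) * b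
          = (fun j : ℕ => q ^ (2 * (j : ℤ) - 2 * (k : ℤ) - 1)) (j + 1)
            - (fun j : ℕ => q ^ (2 * (j : ℤ) - 2 * (k : ℤ) - 1)) j := by
        intro j _
        simp only
        push_cast
        rw [show (2 * ((j : ℤ) + 1) - 2 * (k : ℤ) - 1) = (2 * (j : ℤ) - 2 * k) + 1 by ring,
          show (2 * (j : ℤ) - 2 * (k : ℤ) - 1) = (2 * (j : ℤ) - 2 * k) - 1 by ring,
          zpow_add_one₀ hq, zpow_sub_one₀ hq, hbdef]
        ring
      calc (∑ j ∈ range N, q ^ (2 * (j : ℤ) - 2 * (k : ℤ))) * b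
          = ∑ j ∈ range N, ((fun j : ℕ => q ^ (2 * (j : ℤ) - 2 * (k : ℤ) - 1)) (j + 1)
              - (fun j : ℕ => q ^ (2 * (j : ℤ) - 2 * (k : ℤ) - 1)) j) := by
            rw [Finset.sum_mul]; exact Finset.sum_congr rfl hterm
        _ = (fun j : ℕ => q ^ (2 * (j : ℤ) - 2 * (k : ℤ) - 1)) N
              - (fun j : ℕ => q ^ (2 * (j : ℤ) - 2 * (k : ℤ) - 1)) 0 :=
            Finset.sum_range_sub (fun j : ℕ => q ^ (2 * (j : ℤ) - 2 * (k : ℤ) - 1)) N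
        _ = q ^ (N : ℤ) - q ^ (-(N : ℤ)) := by
            simp only
            congr 1 <;> congr 1 <;> (push_cast [hN]; ring)
    -- reindex the RHS sum
    have hB1 : ∑ n ∈ Finset.Icc 1 (k + 1),
        (Nat.choose N (2 * n - 1) : ℝ) * χ ^ (2 * (k + 1 - n)) * (χ ^ 2 - 4) ^ (n - 1)
        = ∑ i ∈ range (k + 1),
            (Nat.choose N (2 * i + 1) : ℝ) * χ ^ (2 * (k - i)) * (b ^ 2) ^ i := by
      rw [show Finset.Icc 1 (k + 1) = Finset.Ico 1 (k + 2) by exact (Finset.Ico_add_one_right_eq_Icc 1 (k + 1)).symm,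
        Finset.sum_Ico_eq_sum_range]
      apply Finset.sum_congr (by norm_num)
      intro i hi
      rw [show 2 * (1 + i) - 1 = 2 * i + 1 by omega, show k + 1 - (1 + i) = k - i by omega,
        show (1 + i) - 1 = i by omega, hb2]
    -- binomial identity
    have hB2 : (∑ i ∈ range (k + 1),
          (Nat.choose N (2 * i + 1) : ℝ) * χ ^ (2 * (k - i)) * (b ^ 2) ^ i) * (2 * b)
        = (χ + b) ^ N - (χ - b) ^ N := by
      rw [show χ - b = χ + (-b) by ring, add_pow, add_pow, ← Finset.sum_sub_distrib,
        show N + 1 = 2 * (k + 1) by omega, pair_sum, Finset.sum_mul,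
        ← Finset.sum_range_reflect
          (fun i => (Nat.choose N (2 * i + 1) : ℝ) * χ ^ (2 * (k - i)) * (b ^ 2) ^ i * (2 * b))
          (k + 1)]
      apply Finset.sum_congr rfl
      intro i hi
      have hik : i ≤ k := by
        have := Finset.mem_range.mp hi; omega
      have e1 : k + 1 - 1 - i = k - i := by omega
      have e2 : k - (k - i) = i := by omega
      have e3 : N - 2 * i = 2 * (k - i) + 1 := by omega
      have e4 : N - (2 * i + 1) = 2 * (k - i) := by omega
      have e5 : Nat.choose N (2 * (k - i) + 1) = Nat.choose N (2 * i) := by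
        rw [← e3, Nat.choose_symm (by omega)]
      rw [e1, e2, e3, e4, e5]
      have hodd : (-b) ^ (2 * (k - i) + 1) = -(b ^ (2 * (k - i) + 1)) :=
        Odd.neg_pow ⟨k - i, by ring⟩ b
      have heven : (-b) ^ (2 * (k - i)) = b ^ (2 * (k - i)) :=
        Even.neg_pow ⟨k - i, by ring⟩ b
      rw [hodd, heven, ← pow_mul, pow_succ]
      ring
    -- assemble
    have h2b : (2 : ℝ) * b ≠ 0 := mul_ne_zero two_ne_zero hb
    have hfin : (χ + b) ^ N - (χ - b) ^ N = 2 ^ N * (q ^ (N : ℤ) - q ^ (-(N : ℤ))) := by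
      rw [hplus, hminus, mul_pow, mul_pow, inv_pow, ← zpow_natCast q N, ← zpow_neg]
      ring
    have h4 : (4 : ℝ) ^ (-(k : ℤ)) * 2 ^ N = 2 := by
      rw [zpow_neg, zpow_natCast]
      have h2N : (2 : ℝ) ^ N = 2 * 4 ^ k := by
        rw [hN, pow_succ, pow_mul]; norm_num; ring
      rw [h2N]
      field_simp
    rw [hB1]
    apply mul_right_cancel₀ h2b
    calc (∑ j ∈ range N, q ^ (2 * (j : ℤ) - 2 * (k : ℤ))) * (2 * b)
        = ((∑ j ∈ range N, q ^ (2 * (j : ℤ) - 2 * (k : ℤ))) * b) * 2 := by ring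
      _ = (q ^ (N : ℤ) - q ^ (-(N : ℤ))) * 2 := by rw [hA]
      _ = ((4 : ℝ) ^ (-(k : ℤ)) * 2 ^ N) * (q ^ (N : ℤ) - q ^ (-(N : ℤ))) := by rw [h4]; ring
      _ = (4 : ℝ) ^ (-(k : ℤ)) * ((χ + b) ^ N - (χ - b) ^ N) := by rw [hfin]; ring
      _ = (4 : ℝ) ^ (-(k : ℤ)) * ((∑ i ∈ range (k + 1),
            (Nat.choose N (2 * i + 1) : ℝ) * χ ^ (2 * (k - i)) * (b ^ 2) ^ i) * (2 * b)) := by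
          rw [hB2]
      _ = ((4 : ℝ) ^ (-(k : ℤ)) * ∑ i ∈ range (k + 1),
            (Nat.choose N (2 * i + 1) : ℝ) * χ ^ (2 * (k - i)) * (b ^ 2) ^ i) * (2 * b) := by
          ring
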